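/- arXiv:2501.00799 — 2 statements merged into one kernel-verified Lean document; each statement's English description precedes it below -/
import Mathlib

section
/- (Laurent–Massart chi-squared upper tail) If X is a chi-squared random variable with M degrees of freedom, then for any δ ∈ (0,1), with probability at least 1 − δ, X ≤ (√M + √(ln(1/δ)))² + ln(1/δ). -/
open scoped BigOperators NNReal ENNReal
open MeasureTheory ProbabilityTheory Real

namespace LMaux

lemma gauss_int {t : ℝ} (ht : t < 1/2) :
    ∫ x, Real.exp (t * x ^ 2) ∂(gaussianReal 0 1) = (Real.sqrt (1 - 2*t))⁻¹ := by
  have hb : (0:ℝ) < 1/2 - t := by linarith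
  rw [gaussianReal_of_var_ne_zero 0 one_ne_zero, gaussianPDF_def]
  have hcoe : ∀ x : ℝ, ENNReal.ofReal (gaussianPDFReal 0 1 x)
      = ((Real.toNNReal (gaussianPDFReal 0 1 x) : ℝ≥0) : ℝ≥0∞) := fun x => rfl
  simp_rw [hcoe]
  rw [integral_withDensity_eq_integral_smul (measurable_gaussianPDFReal 0 1).real_toNNReal]
  have heq : ∀ x : ℝ, (Real.toNNReal (gaussianPDFReal 0 1 x)) • Real.exp (t * x ^ 2)
      = (Real.sqrt (2*π))⁻¹ * Real.exp (-(1/2 - t) * x ^ 2) := by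
    intro x
    rw [NNReal.smul_def, smul_eq_mul, Real.coe_toNNReal _ (gaussianPDFReal_nonneg 0 1 x)]
    simp only [gaussianPDFReal, NNReal.coe_one, mul_one, sub_zero]
    rw [mul_assoc, ← Real.exp_add]
    ring_nf
  simp_rw [heq]
  rw [integral_const_mul, integral_gaussian]
  rw [← Real.sqrt_inv, ← Real.sqrt_mul (by positivity), ← Real.sqrt_inv]
  congr 1
  rw [eq_comm, inv_eq_iff_eq_inv]
  field_simp

lemma gauss_integrable {t : ℝ} (ht : t < 1/2) :
    Integrable (fun x => Real.exp (t * x ^ 2)) (gaussianReal 0 1) := by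
  have hb : (0:ℝ) < 1/2 - t := by linarith
  rw [gaussianReal_of_var_ne_zero 0 one_ne_zero, gaussianPDF_def]
  rw [integrable_withDensity_iff (measurable_gaussianPDFReal 0 1).ennreal_ofReal
    (ae_of_all _ fun x => ENNReal.ofReal_lt_top)]
  have heq : ∀ x : ℝ, Real.exp (t * x ^ 2) * (ENNReal.ofReal (gaussianPDFReal 0 1 x)).toReal
      = (Real.sqrt (2*π))⁻¹ * Real.exp (-(1/2 - t) * x ^ 2) := by
    intro x
    rw [ENNReal.toReal_ofReal (gaussianPDFReal_nonneg 0 1 x)]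
    simp only [gaussianPDFReal, NNReal.coe_one, mul_one, sub_zero]
    rw [mul_comm, mul_assoc, ← Real.exp_add]
    ring_nf
  simp_rw [heq]
  exact (integrable_exp_neg_mul_sq hb).const_mul _

def G : Type := ℝ

def r (x : G) : ℝ := x

noncomputable instance : MeasureSpace G :=
  { toMeasurableSpace := inferInstanceAs (MeasurableSpace ℝ),
    volume := gaussianReal 0 1 }

instance : IsProbabilityMeasure (volume : Measure G) :=
  inferInstanceAs (IsProbabilityMeasure (gaussianReal 0 1))

instance : SigmaFinite (volume : Measure G) :=
  inferInstanceAs (SigmaFinite (gaussianReal 0 1))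

lemma prod_int (M : ℕ) {t : ℝ} (ht : t < 1/2) :
    ∫ g : Fin M → ℝ, Real.exp (t * ∑ i, (g i) ^ 2)
        ∂(Measure.pi fun _ : Fin M => gaussianReal 0 1)
      = ((Real.sqrt (1 - 2*t))⁻¹) ^ M := by
  have key : ∫ g : Fin M → G, Real.exp (t * ∑ i, (r (g i)) ^ 2)
      = ((Real.sqrt (1 - 2*t))⁻¹) ^ M := by
    have h : ∀ g : Fin M → G, Real.exp (t * ∑ i, (r (g i)) ^ 2)
        = ∏ i, Real.exp (t * (r (g i)) ^ 2) := by
      intro g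
      rw [Finset.mul_sum, Real.exp_sum]
    simp_rw [h]
    rw [volume_pi, integral_fintype_prod_eq_pow (fun x : G => Real.exp (t * (r x) ^ 2))]
    rw [show (∫ x : G, Real.exp (t * (r x) ^ 2)) = ∫ x, Real.exp (t * x ^ 2) ∂(gaussianReal 0 1)
      from rfl, gauss_int ht, Fintype.card_fin]
  exact key

lemma prod_integrable (M : ℕ) {t : ℝ} (ht : t < 1/2) :
    Integrable (fun g : Fin M → ℝ => Real.exp (t * ∑ i, (g i) ^ 2))
      (Measure.pi fun _ : Fin M => gaussianReal 0 1) := by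
  have key : Integrable (fun g : Fin M → G => Real.exp (t * ∑ i, (r (g i)) ^ 2)) := by
    have h : ∀ g : Fin M → G, Real.exp (t * ∑ i, (r (g i)) ^ 2)
        = ∏ i, Real.exp (t * (r (g i)) ^ 2) := by
      intro g
      rw [Finset.mul_sum, Real.exp_sum]
    simp_rw [h]
    exact Integrable.fintype_prod (f := fun _ : Fin M => fun x : G => Real.exp (t * (r x) ^ 2))
      (fun i => gauss_integrable ht)
  exact key

lemma analytic (M : ℕ) (hM : 1 ≤ M) {x a t : ℝ} (hx : 0 < x)
    (ha : a = (Real.sqrt M + Real.sqrt x) ^ 2 + x) (htdef : t = (a - (M : ℝ)) / (2 * a)) :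
    Real.exp (-t * a) * ((Real.sqrt (1 - 2 * t))⁻¹) ^ M ≤ Real.exp (-x) := by
  have hm1 : (1 : ℝ) ≤ (M : ℝ) := by exact_mod_cast hM
  set m : ℝ := (M : ℝ) with hmdef
  set b := Real.sqrt m with hbdef
  set c := Real.sqrt x with hcdef
  have hb1 : 1 ≤ b := by rw [hbdef]; rw [show (1:ℝ) = Real.sqrt 1 by simp]; exact Real.sqrt_le_sqrt hm1
  have hb0 : 0 < b := by linarith
  have hc0 : 0 < c := Real.sqrt_pos.mpr hx
  have hb2 : b ^ 2 = m := Real.sq_sqrt (by linarith)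
  have hc2 : c ^ 2 = x := Real.sq_sqrt hx.le
  have ha' : a = (b + c) ^ 2 + x := ha
  have hapos : 0 < a := by nlinarith
  have ham : m < a := by nlinarith
  set s := Real.sqrt a with hsdef
  have hs0 : 0 < s := Real.sqrt_pos.mpr hapos
  have hs2 : s ^ 2 = a := Real.sq_sqrt hapos.le
  have hbcs : b + c ≤ s := by nlinarith
  have hbs : b ≤ s := by linarith
  have h12t : 1 - 2 * t = m / a := by
    rw [htdef]; field_simp; ring
  have hta : t * a = (a - m) / 2 := by
    rw [htdef]; field_simp
  -- rewrite the power
  have hsqrt : (Real.sqrt (1 - 2 * t))⁻¹ = s / b := by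
    rw [h12t, show m / a = (b/s)^2 by rw [div_pow, hb2, hs2],
      Real.sqrt_sq (by positivity), inv_div]
  rw [hsqrt]
  have hpow : (s / b) ^ M = Real.exp ((M : ℝ) * Real.log (s / b)) := by
    rw [Real.exp_nat_mul, Real.exp_log (by positivity)]
  rw [hpow, ← Real.exp_add, Real.exp_le_exp]
  -- key log bound
  have hw1 : 1 ≤ s / b := (one_le_div hb0).mpr hbs
  have hlog : Real.log (s / b) ≤ (s / b - b / s) / 2 := by
    have h1 := Real.self_le_sinh_iff.mpr (Real.log_nonneg hw1)
    rwa [Real.sinh_log (by positivity), inv_div] at h1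
  have ha_m : a - m = 2*b*c + 2*c^2 := by nlinarith
  have hkey : m * ((s / b - b / s) / 2) ≤ (a - m) / 2 - x := by
    have e1 : m * ((s / b - b / s) / 2) = m * (a - m) / (2 * (b * s)) := by
      rw [← hs2, ← hb2]; field_simp
    have goal2 : m * (a - m) ≤ (2*b*c) * (b*s) := by
      have h4 : (2*b^2*c) * (b + c) ≤ (2*b^2*c) * s :=
        mul_le_mul_of_nonneg_left hbcs (by positivity)
      calc m * (a - m) = (2*b^2*c)*(b+c) := by rw [ha_m, ← hb2]; ring
        _ ≤ (2*b^2*c)*s := h4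
        _ = (2*b*c)*(b*s) := by ring
    have e2 : m * (a - m) / (2 * (b * s)) ≤ b * c := by
      rw [div_le_iff₀ (by positivity)]
      calc m * (a - m) ≤ (2*b*c)*(b*s) := goal2
        _ = b * c * (2 * (b * s)) := by ring
    have e3 : b * c = (a - m) / 2 - x := by rw [ha_m]; linarith [hc2]
    linarith [e1.le, e2, e3]
  have hmono : (M : ℝ) * Real.log (s / b) ≤ m * ((s / b - b / s) / 2) := by
    rw [← hmdef]
    exact mul_le_mul_of_nonneg_left hlog (by linarith)
  have : -(t * a) + (M:ℝ) * Real.log (s/b) ≤ -x := by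
    rw [hta]; linarith
  linarith [this]

end LMaux

open LMaux

theorem laurent_massart_chi_squared_tail (M : ℕ) (δ : ℝ) (hδ0 : 0 < δ) (hδ1 : δ < 1) :
    (Measure.pi fun _ : Fin M => gaussianReal 0 1)
      {g | ∑ i, (g i) ^ 2 ≤
        (Real.sqrt M + Real.sqrt (Real.log (1 / δ))) ^ 2 + Real.log (1 / δ)}
      ≥ ENNReal.ofReal (1 - δ) := by
  have hx : 0 < Real.log (1 / δ) := Real.log_pos (one_lt_one_div hδ0 hδ1)
  set x := Real.log (1 / δ) with hxdef
  set P := Measure.pi fun _ : Fin M => gaussianReal 0 1 with hPdef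
  haveI : IsProbabilityMeasure P := by rw [hPdef]; infer_instance
  set a : ℝ := (Real.sqrt M + Real.sqrt x) ^ 2 + x with hadef
  have ha0 : 0 ≤ a := by rw [hadef]; positivity
  rcases Nat.eq_zero_or_pos M with hM0 | hM
  · subst hM0
    have hset : {g : Fin 0 → ℝ | ∑ i, (g i) ^ 2 ≤ a} = Set.univ := by
      ext g
      simp only [Set.mem_setOf_eq, Set.mem_univ, iff_true, Finset.univ_eq_empty,
        Finset.sum_empty]
      exact ha0
    rw [ge_iff_le, hset, measure_univ]
    exact ENNReal.ofReal_le_one.mpr (by linarith)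
  · set t := (a - (M : ℝ)) / (2 * a) with htdef
    have hm1 : (1 : ℝ) ≤ (M : ℝ) := by exact_mod_cast hM
    have hapos : 0 < a := by rw [hadef]; positivity
    have ham : (M : ℝ) < a := by
      have h1 : Real.sqrt (M : ℝ) ^ 2 = (M : ℝ) := Real.sq_sqrt (by linarith)
      have h2 : 0 < Real.sqrt x := Real.sqrt_pos.mpr hx
      have h3 : 0 < Real.sqrt (M:ℝ) := Real.sqrt_pos.mpr (by linarith)
      rw [hadef]
      nlinarith
    have ht2 : t < 1/2 := by
      rw [htdef, div_lt_iff₀ (by linarith)]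
      linarith
    have ht0 : 0 ≤ t := by
      rw [htdef]
      exact div_nonneg (by linarith) (by linarith)
    have hch := measure_ge_le_exp_mul_mgf (X := fun g : Fin M → ℝ => ∑ i, (g i) ^ 2)
      (μ := P) (t := t) a ht0 (prod_integrable M ht2)
    have hmgf : mgf (fun g : Fin M → ℝ => ∑ i, (g i) ^ 2) P t
        = ((Real.sqrt (1 - 2*t))⁻¹) ^ M := prod_int M ht2
    rw [hmgf] at hch
    have hδa : Real.exp (-t * a) * ((Real.sqrt (1 - 2*t))⁻¹) ^ M ≤ δ := by
      have h1 := analytic M hM hx hadef htdef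
      have hexp : Real.exp (-x) = δ := by
        rw [hxdef, one_div, Real.log_inv, neg_neg, Real.exp_log hδ0]
      linarith
    have hup : P {g | a ≤ ∑ i, (g i) ^ 2} ≤ ENNReal.ofReal δ := by
      rw [ENNReal.le_ofReal_iff_toReal_le (measure_ne_top _ _) hδ0.le]
      exact hch.trans hδa
    have hX : Measurable fun g : Fin M → ℝ => ∑ i, (g i) ^ 2 :=
      Finset.measurable_sum _ fun i _ => (measurable_pi_apply i).pow_const 2
    have hSm : MeasurableSet {g : Fin M → ℝ | ∑ i, (g i) ^ 2 ≤ a} :=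
      measurableSet_le hX measurable_const
    have hcompl : P {g : Fin M → ℝ | ∑ i, (g i) ^ 2 ≤ a}ᶜ ≤ ENNReal.ofReal δ := by
      refine le_trans (measure_mono ?_) hup
      intro g hg
      simp only [Set.mem_compl_iff, Set.mem_setOf_eq, not_le] at hg ⊢
      linarith
    have hsum : P {g : Fin M → ℝ | ∑ i, (g i) ^ 2 ≤ a}
        + P {g : Fin M → ℝ | ∑ i, (g i) ^ 2 ≤ a}ᶜ = 1 := by
      rw [measure_add_measure_compl hSm, measure_univ]
    have h1 : ENNReal.ofReal (1 - δ) + ENNReal.ofReal δ = 1 := by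
      rw [← ENNReal.ofReal_add (by linarith) hδ0.le]
      norm_num
    rw [ge_iff_le]
    have h2 : ENNReal.ofReal (1 - δ) + ENNReal.ofReal δ
        ≤ P {g : Fin M → ℝ | ∑ i, (g i) ^ 2 ≤ a} + ENNReal.ofReal δ := by
      rw [h1, ← hsum]
      exact add_le_add_right hcompl _
    exact (ENNReal.add_le_add_iff_right ENNReal.ofReal_ne_top).mp h2
end

section
/- Let d ∈ ℝ^n have nonnegative entries and let y_1,…,y_n be i.i.d. standard normal random variables. Then for any δ ∈ (0,1), with probability at least 1 − δ, Σ_{i=1}^n d_i y_i² ≤ ‖d‖₁ + 2‖d‖₂ √(ln(1/δ)) + 2‖d‖_∞ ln(1/δ). -/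
open scoped BigOperators ENNReal NNReal
open MeasureTheory ProbabilityTheory

lemma neg_log_le (x : ℝ) (h0 : 0 ≤ x) (h1 : x < 1) :
    -Real.log (1 - x) ≤ x + x ^ 2 / (2 * (1 - x)) := by
  have key : ∀ y ∈ Set.Ico (0:ℝ) 1,
      0 ≤ y + y ^ 2 / (2 * (1 - y)) + Real.log (1 - y) := by
    set f : ℝ → ℝ := fun y => y + y ^ 2 / (2 * (1 - y)) + Real.log (1 - y) with hf
    have hderiv : ∀ y ∈ Set.Ico (0:ℝ) 1,
        HasDerivAt f (y ^ 2 / (2 * (1 - y) ^ 2)) y := by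
      intro y hy
      have hy1 : (1:ℝ) - y ≠ 0 := by cases hy with | intro a b => intro h; nlinarith
      have h1 : HasDerivAt (fun y : ℝ => (1:ℝ) - y) (-1) y := by
        simpa using (hasDerivAt_id y).const_sub 1
      have h2 : HasDerivAt (fun y : ℝ => y ^ 2) (2 * y) y := by
        simpa using hasDerivAt_pow 2 y
      have h3 : HasDerivAt (fun y : ℝ => 2 * (1 - y)) (-2) y := by
        simpa using h1.const_mul 2
      have h4 : HasDerivAt (fun y : ℝ => y ^ 2 / (2 * (1 - y)))
          ((2 * y * (2 * (1 - y)) - y ^ 2 * (-2)) / (2 * (1 - y)) ^ 2) y :=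
        h2.div h3 (by simpa using hy1)
      have h5 : HasDerivAt (fun y : ℝ => Real.log (1 - y)) ((-1) / (1 - y)) y :=
        h1.log hy1
      have := ((hasDerivAt_id y).add h4).add h5
      refine this.congr_deriv ?_
      field_simp
      ring
    have hmono : MonotoneOn f (Set.Ico (0:ℝ) 1) := by
      have hconv : Convex ℝ (Set.Ico (0:ℝ) 1) := convex_Ico 0 1
      refine monotoneOn_of_deriv_nonneg hconv ?_ ?_ ?_
      · intro y hy
        exact (hderiv y hy).continuousAt.continuousWithinAt
      · intro y hy
        rw [interior_Ico] at hy
        exact (hderiv y ⟨hy.1.le, hy.2⟩).differentiableAt.differentiableWithinAt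
      · intro y hy
        rw [interior_Ico] at hy
        rw [(hderiv y ⟨hy.1.le, hy.2⟩).deriv]
        positivity
    intro y hy
    have h0' : f 0 = 0 := by simp [hf]
    have := hmono (Set.left_mem_Ico.2 one_pos) hy hy.1
    rw [h0'] at this
    exact this
  have := key x ⟨h0, h1⟩
  linarith

lemma gaussianPDF_smul_exp (c : ℝ) :
    (fun x : ℝ => (gaussianPDFReal 0 1 x).toNNReal • Real.exp (c * x ^ 2))
      = fun x : ℝ => (Real.sqrt (2 * Real.pi))⁻¹ * Real.exp (-(1/2 - c) * x ^ 2) := by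
  ext x
  have hnn := gaussianPDFReal_nonneg 0 1 x
  rw [NNReal.smul_def, Real.coe_toNNReal _ hnn]
  simp only [gaussianPDFReal, NNReal.coe_one, sub_zero, mul_one]
  rw [smul_eq_mul, mul_assoc, ← Real.exp_add]
  congr 2
  ring

lemma gaussian_sq_integrable {c : ℝ} (hc : c < 1/2) :
    Integrable (fun x => Real.exp (c * x ^ 2)) (gaussianReal 0 1) := by
  rw [gaussianReal_of_var_ne_zero 0 one_ne_zero]
  have hmeas : Measurable fun x : ℝ => (gaussianPDFReal 0 1 x).toNNReal :=
    (measurable_gaussianPDFReal 0 1).real_toNNReal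
  have hpdf : gaussianPDF 0 1 = fun x => ((gaussianPDFReal 0 1 x).toNNReal : ℝ≥0∞) := by
    ext x; simp [gaussianPDF, ENNReal.ofReal]
  rw [hpdf, integrable_withDensity_iff_integrable_smul hmeas, gaussianPDF_smul_exp]
  exact (integrable_exp_neg_mul_sq (by linarith)).const_mul _

lemma gaussian_sq_mgf {c : ℝ} (hc : c < 1/2) :
    ∫ x, Real.exp (c * x ^ 2) ∂(gaussianReal 0 1) = 1 / Real.sqrt (1 - 2 * c) := by
  rw [gaussianReal_of_var_ne_zero 0 one_ne_zero]
  have hmeas : Measurable fun x : ℝ => (gaussianPDFReal 0 1 x).toNNReal :=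
    (measurable_gaussianPDFReal 0 1).real_toNNReal
  have hpdf : gaussianPDF 0 1 = fun x => ((gaussianPDFReal 0 1 x).toNNReal : ℝ≥0∞) := by
    ext x; simp [gaussianPDF, ENNReal.ofReal]
  rw [hpdf, integral_withDensity_eq_integral_smul hmeas, gaussianPDF_smul_exp,
    integral_const_mul, integral_gaussian]
  have hhalf : (0:ℝ) < 1/2 - c := by linarith
  have harg : ((2*Real.pi)⁻¹ * (Real.pi/(1/2-c))) = (1-2*c)⁻¹ := by
    have h1 : Real.pi ≠ 0 := Real.pi_ne_zero
    have h2 : (1:ℝ)/2 - c ≠ 0 := ne_of_gt hhalf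
    have h3 : (1:ℝ) - 2*c ≠ 0 := by intro h; apply h2; linarith
    field_simp
  rw [← Real.sqrt_inv, ← Real.sqrt_mul (by positivity), harg, Real.sqrt_inv, one_div]

lemma pi_integral (n : ℕ) (f : Fin n → ℝ → ℝ) :
    ∫ y : Fin n → ℝ, ∏ i, f i (y i) ∂(Measure.pi fun _ => gaussianReal 0 1)
      = ∏ i, ∫ x, f i x ∂(gaussianReal 0 1) := by
  letI : MeasureSpace ℝ := ⟨gaussianReal 0 1⟩
  haveI : SigmaFinite (volume : Measure ℝ) := by
    change SigmaFinite (gaussianReal 0 1); infer_instance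
  exact MeasureTheory.integral_fintype_prod_eq_prod f

lemma pi_integrable (n : ℕ) (f : Fin n → ℝ → ℝ)
    (hf : ∀ i, Integrable (f i) (gaussianReal 0 1)) :
    Integrable (fun y : Fin n → ℝ => ∏ i, f i (y i))
      (Measure.pi fun _ => gaussianReal 0 1) := by
  letI : MeasureSpace ℝ := ⟨gaussianReal 0 1⟩
  haveI : SigmaFinite (volume : Measure ℝ) := by
    change SigmaFinite (gaussianReal 0 1); infer_instance
  exact Integrable.fintype_prod_dep hf

lemma exp_alg (b M s l Sd : ℝ) (hb : 0 < b) (hM : 0 < M) (hs : 0 < s)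
    (hl : l = s / (b + 2 * M * s)) :
    l * Sd + l ^ 2 * b ^ 2 / (1 - 2 * l * M) + -l * (Sd + 2 * b * s + 2 * M * s ^ 2)
      = -s ^ 2 := by
  have hden : (0:ℝ) < b + 2 * M * s := by positivity
  have h1M : 1 - 2 * l * M = b / (b + 2 * M * s) := by
    rw [hl]; field_simp; ring
  rw [h1M, hl]
  field_simp
  ring

theorem weighted_chi_squared_tail (n : ℕ) (d : Fin n → ℝ) (hd : ∀ i, 0 ≤ d i)
    (δ : ℝ) (hδ0 : 0 < δ) (hδ1 : δ < 1) :
    (Measure.pi fun _ : Fin n => gaussianReal 0 1)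
      {y | ∑ i, d i * (y i) ^ 2 ≤
        (∑ i, d i) + 2 * Real.sqrt (∑ i, (d i) ^ 2) * Real.sqrt (Real.log (1 / δ))
          + 2 * (⨆ i, d i) * Real.log (1 / δ)}
      ≥ ENNReal.ofReal (1 - δ) := by
  have ht : 0 < Real.log (1 / δ) := Real.log_pos (by rw [lt_div_iff₀ hδ0]; linarith)
  by_cases hzero : ∀ i, d i = 0
  · have hsup : (⨆ i, d i) = 0 := by
      rcases Nat.eq_zero_or_pos n with h | h
      · subst h
        exact Real.iSup_of_isEmpty _
      · haveI : Nonempty (Fin n) := ⟨⟨0, h⟩⟩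
        simp only [hzero]
        exact ciSup_const
    have hset : {y : Fin n → ℝ | ∑ i, d i * (y i) ^ 2 ≤
        (∑ i, d i) + 2 * Real.sqrt (∑ i, (d i) ^ 2) * Real.sqrt (Real.log (1 / δ))
          + 2 * (⨆ i, d i) * Real.log (1 / δ)} = Set.univ := by
      ext y
      simp only [Set.mem_setOf_eq, Set.mem_univ, iff_true, hzero, hsup]
      simp
    rw [hset]
    haveI : IsProbabilityMeasure (Measure.pi fun _ : Fin n => gaussianReal 0 1) :=
      inferInstance
    rw [measure_univ]
    exact ENNReal.ofReal_le_one.2 (by linarith)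
  · push_neg at hzero
    obtain ⟨i0, hi0⟩ := hzero
    have hdi0 : 0 < d i0 := (hd i0).lt_of_ne (Ne.symm hi0)
    haveI : Nonempty (Fin n) := ⟨i0⟩
    set t := Real.log (1 / δ) with ht_def
    set s := Real.sqrt t with hs_def
    have hs : 0 < s := Real.sqrt_pos.2 ht
    have hs2 : s ^ 2 = t := Real.sq_sqrt ht.le
    set b := Real.sqrt (∑ i, (d i) ^ 2) with hb_def
    have hsum2 : 0 < ∑ i, (d i) ^ 2 :=
      Finset.sum_pos' (fun i _ => sq_nonneg _) ⟨i0, Finset.mem_univ _, by positivity⟩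
    have hb : 0 < b := Real.sqrt_pos.2 hsum2
    have hb2 : b ^ 2 = ∑ i, (d i) ^ 2 := Real.sq_sqrt hsum2.le
    set M := ⨆ i, d i with hM_def
    have hMle : ∀ i, d i ≤ M := fun i =>
      le_ciSup (Set.Finite.bddAbove (Set.finite_range d)) i
    have hM : 0 < M := hdi0.trans_le (hMle i0)
    set l := s / (b + 2 * M * s) with hl_def
    have hden : 0 < b + 2 * M * s := by positivity
    have hl : 0 < l := div_pos hs hden
    have hlM : 2 * l * M < 1 := by
      have h2 : 2 * l * M = (2 * M * s) / (b + 2 * M * s) := by rw [hl_def]; ring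
      rw [h2, div_lt_one hden]; linarith
    have h1M : 0 < 1 - 2 * l * M := by linarith
    have hld : ∀ i, l * d i < 1 / 2 := fun i => by
      have h1 := hMle i
      have h2 : l * d i ≤ l * M := by nlinarith
      nlinarith
    have hldnn : ∀ i, 0 ≤ l * d i := fun i => mul_nonneg hl.le (hd i)
    set π := Measure.pi fun _ : Fin n => gaussianReal 0 1 with hπ_def
    haveI : IsProbabilityMeasure π := by rw [hπ_def]; infer_instance
    clear_value t s b M l π
    have hexp_eq : ∀ y : Fin n → ℝ,
        Real.exp (l * ∑ i, d i * (y i) ^ 2) = ∏ i, Real.exp (l * d i * (y i) ^ 2) := by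
      intro y
      rw [← Real.exp_sum, Finset.mul_sum]
      congr 1
      exact Finset.sum_congr rfl fun i _ => by ring
    have hint : Integrable (fun y : Fin n → ℝ =>
        Real.exp (l * ∑ i, d i * (y i) ^ 2)) π := by
      rw [hπ_def]
      have := pi_integrable n (fun i x => Real.exp (l * d i * x ^ 2))
        (fun i => gaussian_sq_integrable (hld i))
      exact this.congr (ae_of_all _ fun y => (hexp_eq y).symm)
    have hval : ∫ y, Real.exp (l * ∑ i, d i * (y i) ^ 2) ∂π
        = ∏ i, (1 / Real.sqrt (1 - 2 * (l * d i))) := by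
      rw [show (fun y : Fin n → ℝ => Real.exp (l * ∑ i, d i * (y i) ^ 2))
          = fun y => ∏ i, Real.exp (l * d i * (y i) ^ 2) from funext hexp_eq]
      rw [hπ_def, pi_integral n (fun i x => Real.exp (l * d i * x ^ 2))]
      exact Finset.prod_congr rfl fun i _ => gaussian_sq_mgf (hld i)
    have hpos2 : ∀ i, 0 < 1 - 2 * (l * d i) := fun i => by have := hld i; linarith
    have hprod_le : ∏ i, (1 / Real.sqrt (1 - 2 * (l * d i)))
        ≤ Real.exp (l * (∑ i, d i) + l ^ 2 * (∑ i, (d i) ^ 2) / (1 - 2 * l * M)) := by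
      have heach : ∀ i, (1 / Real.sqrt (1 - 2 * (l * d i)))
          = Real.exp (-(Real.log (1 - 2 * (l * d i)) / 2)) := by
        intro i
        rw [Real.exp_neg, one_div]
        congr 1
        rw [← Real.log_sqrt (hpos2 i).le,
          Real.exp_log (Real.sqrt_pos.2 (hpos2 i))]
      rw [Finset.prod_congr rfl fun i _ => heach i, ← Real.exp_sum, Real.exp_le_exp]
      have hterm : ∀ i ∈ Finset.univ, -(Real.log (1 - 2 * (l * d i)) / 2)
          ≤ l * d i + l ^ 2 * (d i) ^ 2 / (1 - 2 * l * M) := by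
        intro i _
        have hx0 : 0 ≤ 2 * l * d i := by have := hldnn i; linarith
        have hx1 : 2 * l * d i < 1 := by have := hld i; linarith
        have hkey := neg_log_le (2 * l * d i) hx0 hx1
        have hA : 0 < 1 - 2 * l * d i := by linarith
        have hidentity : (2 * l * d i) ^ 2 / (2 * (1 - 2 * l * d i))
            = 2 * (l ^ 2 * (d i) ^ 2 / (1 - 2 * l * d i)) := by
          field_simp
        have hcmp : l ^ 2 * (d i) ^ 2 / (1 - 2 * l * d i)
            ≤ l ^ 2 * (d i) ^ 2 / (1 - 2 * l * M) := by
          apply div_le_div_of_nonneg_left (by positivity) h1M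
          have := hMle i
          nlinarith
        have h2ld : (1:ℝ) - 2 * (l * d i) = 1 - 2 * l * d i := by ring
        rw [h2ld]
        nlinarith [hkey, hidentity, hcmp]
      calc ∑ i, -(Real.log (1 - 2 * (l * d i)) / 2)
          ≤ ∑ i, (l * d i + l ^ 2 * (d i) ^ 2 / (1 - 2 * l * M)) :=
            Finset.sum_le_sum hterm
        _ = l * (∑ i, d i) + l ^ 2 * (∑ i, (d i) ^ 2) / (1 - 2 * l * M) := by
            rw [Finset.sum_add_distrib, ← Finset.mul_sum, ← Finset.sum_div,
              ← Finset.mul_sum]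
    set a := (∑ i, d i) + 2 * b * s + 2 * M * t with ha_def
    have hmeasX : Measurable fun y : Fin n → ℝ => ∑ i, d i * (y i) ^ 2 :=
      Finset.measurable_sum _ fun i _ =>
        (((measurable_pi_apply i).pow_const 2).const_mul _)
    have hcher := measure_ge_le_exp_mul_mgf (X := fun y : Fin n → ℝ => ∑ i, d i * (y i) ^ 2)
      (μ := π) (t := l) a hl.le hint
    have halg : l * (∑ i, d i) + l ^ 2 * (∑ i, (d i) ^ 2) / (1 - 2 * l * M) + -l * a = -t := by
      rw [ha_def, ← hb2, ← hs2]
      exact exp_alg b M s l (∑ i, d i) hb hM hs hl_def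
    have hbound : (π {y | a ≤ ∑ i, d i * (y i) ^ 2}).toReal ≤ δ := by
      refine hcher.trans ?_
      have hmgf : mgf (fun y : Fin n → ℝ => ∑ i, d i * (y i) ^ 2) π l
          = ∫ y, Real.exp (l * ∑ i, d i * (y i) ^ 2) ∂π := rfl
      rw [hmgf, hval]
      calc Real.exp (-l * a) * ∏ i, (1 / Real.sqrt (1 - 2 * (l * d i)))
          ≤ Real.exp (-l * a) *
            Real.exp (l * (∑ i, d i) + l ^ 2 * (∑ i, (d i) ^ 2) / (1 - 2 * l * M)) := by
            exact mul_le_mul_of_nonneg_left hprod_le (Real.exp_nonneg _)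
        _ = Real.exp (l * (∑ i, d i) + l ^ 2 * (∑ i, (d i) ^ 2) / (1 - 2 * l * M) + -l * a) := by
            rw [← Real.exp_add]; ring_nf
        _ = Real.exp (-t) := by rw [halg]
        _ = δ := by
            rw [ht_def, one_div, Real.log_inv, neg_neg, Real.exp_log hδ0]
    have hS : MeasurableSet {y : Fin n → ℝ | ∑ i, d i * (y i) ^ 2 ≤ a} :=
      measurableSet_le hmeasX measurable_const
    have hcompl : π {y : Fin n → ℝ | ∑ i, d i * (y i) ^ 2 ≤ a}ᶜ ≤ ENNReal.ofReal δ := by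
      have hsub : {y : Fin n → ℝ | ∑ i, d i * (y i) ^ 2 ≤ a}ᶜ
          ⊆ {y : Fin n → ℝ | a ≤ ∑ i, d i * (y i) ^ 2} := by
        intro y hy
        simp only [Set.mem_compl_iff, Set.mem_setOf_eq, not_le] at hy
        exact hy.le
      refine (measure_mono hsub).trans ?_
      rw [← ENNReal.ofReal_toReal (measure_ne_top π _)]
      exact ENNReal.ofReal_le_ofReal hbound
    have hfinal : ENNReal.ofReal (1 - δ)
        ≤ π {y : Fin n → ℝ | ∑ i, d i * (y i) ^ 2 ≤ a} := by
      have hπS : π {y : Fin n → ℝ | ∑ i, d i * (y i) ^ 2 ≤ a}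
          = 1 - π {y : Fin n → ℝ | ∑ i, d i * (y i) ^ 2 ≤ a}ᶜ := by
        have h := measure_compl hS.compl (measure_ne_top π _)
        rw [compl_compl, measure_univ] at h
        exact h
      rw [hπS]
      calc ENNReal.ofReal (1 - δ) = ENNReal.ofReal 1 - ENNReal.ofReal δ :=
            ENNReal.ofReal_sub 1 hδ0.le
        _ = 1 - ENNReal.ofReal δ := by rw [ENNReal.ofReal_one]
        _ ≤ 1 - π {y : Fin n → ℝ | ∑ i, d i * (y i) ^ 2 ≤ a}ᶜ :=
            tsub_le_tsub_left hcompl 1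
    exact hfinal
end
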